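/- In the CAR setting with vacuum: (i) if σ ∈ ℂ and there exists η ≠ 0 with L_k η = σ η for all 1 ≤ k < n, then σ is an integer with −4 ≤ σ ≤ 4; (ii) conversely, for every integer σ with −4 ≤ σ ≤ 4 there exists a unit vector η ∈ V with L_k η = σ η for all 1 ≤ k < n; (iii) if η and η′ are joint eigenvectors as in (i) belonging to distinct values σ ≠ σ′, then ⟨η, η′⟩ = 0. -/

import Mathlib

set_option linter.unusedSectionVars false

section Aux
variable {V : Type*} [NormedAddCommGroup V] [InnerProductSpace ℂ V]
variable {I : Type*} [DecidableEq I]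

theorem CAR_step_lemma (A p q : V →ₗ[ℂ] V) (hp : p * p = p) (hq : q * q = q)
    (hpq : p * q = q * p) (hAp : Commute A p) (hAq : Commute A q)
    (σ : ℂ) (w : V) (hw : w ≠ 0) (hσ : (A + (p - q)) w = σ • w) :
    ∃ e : ℤ, -1 ≤ e ∧ e ≤ 1 ∧ ∃ w' : V, w' ≠ 0 ∧ A w' = (σ - e) • w' := by
  have hcpq : Commute p q := hpq
  set D : V →ₗ[ℂ] V := p - q with hD
  set Pp : V →ₗ[ℂ] V := p * (1 - q) with hPp
  set Pm : V →ₗ[ℂ] V := q * (1 - p) with hPm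
  set P0 : V →ₗ[ℂ] V := 1 - Pp - Pm with hP0
  have h1 : p * (p * q) = p * q := by rw [← mul_assoc, hp]
  have h2 : q * (p * q) = p * q := by rw [← mul_assoc, ← hpq, mul_assoc, hq]
  have h3 : p * (q * p) = p * q := by rw [← hpq, ← mul_assoc, hp]
  have h4 : q * (q * p) = q * p := by rw [← mul_assoc, hq]
  have hDPp : D * Pp = (1 : ℂ) • Pp := by
    rw [hD, hPp, one_smul]
    simp only [mul_sub, sub_mul, mul_one]
    rw [hp, h1, h2, ← hpq]
    abel
  have hDPm : D * Pm = (-1 : ℂ) • Pm := by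
    rw [hD, hPm]
    simp only [mul_sub, sub_mul, mul_one, neg_smul, one_smul]
    rw [hq, h3, h4, ← hpq]
    abel
  have hDP0 : D * P0 = (0 : ℂ) • P0 := by
    rw [hP0, mul_sub, mul_sub, mul_one, hDPp, hDPm, zero_smul, hD, hPp, hPm]
    simp only [mul_sub, mul_one, one_smul, neg_smul]
    rw [← hpq]
    abel
  have hDq : Commute D q := hcpq.sub_left (Commute.refl q)
  have hDp : Commute D p := (Commute.refl p).sub_left hcpq.symm
  have hDPpC : Commute D Pp := hDp.mul_right ((Commute.one_right D).sub_right hDq)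
  have hDPmC : Commute D Pm := hDq.mul_right ((Commute.one_right D).sub_right hDp)
  have hAPp : Commute A Pp := hAp.mul_right ((Commute.one_right A).sub_right hAq)
  have hAPm : Commute A Pm := hAq.mul_right ((Commute.one_right A).sub_right hAp)
  have hAP0 : Commute A P0 :=
    ((Commute.one_right A).sub_right hAPp).sub_right hAPm
  have hDP0C : Commute D P0 :=
    ((Commute.one_right D).sub_right hDPpC).sub_right hDPmC
  have key : ∀ (P : V →ₗ[ℂ] V) (e : ℂ), Commute A P → Commute D P → D * P = e • P →
      A (P w) = (σ - e) • P w := by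
    intro P e hAP hDPC hDP
    have hADP : Commute (A + D) P := hAP.add_left hDPC
    have h5 : (A + D) (P w) = σ • P w := by
      have := LinearMap.congr_fun hADP w
      simp only [Module.End.mul_apply] at this
      rw [this, hσ, map_smul]
    have h6 : D (P w) = e • P w := by
      have := LinearMap.congr_fun hDP w
      simpa only [Module.End.mul_apply, LinearMap.smul_apply] using this
    have h7 : A (P w) + D (P w) = σ • P w := by
      simpa only [LinearMap.add_apply] using h5
    rw [h6] at h7
    rw [sub_smul]
    exact eq_sub_of_add_eq h7
  by_cases hp0 : Pp w = 0
  · by_cases hm0 : Pm w = 0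
    · refine ⟨0, by norm_num, by norm_num, P0 w, ?_, ?_⟩
      · have : P0 w = w := by
          rw [hP0]
          simp only [LinearMap.sub_apply, Module.End.one_apply, hp0, hm0, sub_zero]
        rw [this]; exact hw
      · have := key P0 0 hAP0 hDP0C hDP0
        simpa using this
    · exact ⟨-1, by norm_num, by norm_num, Pm w, hm0,
        by simpa using key Pm (-1) hAPm hDPmC hDPm⟩
  · exact ⟨1, by norm_num, by norm_num, Pp w, hp0,
      by simpa using key Pp 1 hAPp hDPpC hDPp⟩

theorem CAR_cc_self (c : I → (V →ₗ[ℂ] V))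
    (hcc : ∀ p q : I, c p * c q + c q * c p = 0) (p : I) :
    c p * c p = 0 := by
  have h2 : (2 : ℂ) • (c p * c p) = 0 := by rw [two_smul]; exact hcc p p
  simpa using (smul_eq_zero.mp h2).resolve_left (by norm_num)

theorem CAR_nn_comm (c d : I → (V →ₗ[ℂ] V))
    (hcd : ∀ p q, c p * d q + d q * c p = if p = q then 1 else 0)
    (hcc : ∀ p q : I, c p * c q + c q * c p = 0)
    (hdd : ∀ p q : I, d p * d q + d q * d p = 0) (p q : I) :
    (d p * c p) * (d q * c q) = (d q * c q) * (d p * c p) := by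
  by_cases h : p = q
  · subst h; rfl
  · have hbx : c p * d q = -(d q * c p) :=
      eq_neg_of_add_eq_zero_left (by rw [hcd p q, if_neg h])
    have hax : d p * d q = -(d q * d p) :=
      eq_neg_of_add_eq_zero_left (hdd p q)
    have hby : c p * c q = -(c q * c p) :=
      eq_neg_of_add_eq_zero_left (hcc p q)
    have hay : d p * c q = -(c q * d p) :=
      eq_neg_of_add_eq_zero_left (by
        have := hcd q p
        rw [if_neg (Ne.symm h)] at this
        linear_combination (norm := abel) this)
    calc (d p * c p) * (d q * c q)
        = d p * ((c p * d q) * c q) := by simp only [mul_assoc]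
      _ = -(d p * (d q * (c p * c q))) := by rw [hbx]; simp only [neg_mul, mul_neg, mul_assoc]
      _ = (d q * (d p * (c p * c q))) := by
            rw [← mul_assoc, hax]; simp only [neg_mul, neg_neg, mul_assoc]
      _ = -(d q * (d p * (c q * c p))) := by rw [hby]; simp only [neg_mul, mul_neg, mul_assoc]
      _ = -(d q * ((d p * c q) * c p)) := by simp only [mul_assoc]
      _ = (d q * (c q * (d p * c p))) := by rw [hay]; simp only [neg_mul, mul_neg, neg_neg, mul_assoc]
      _ = (d q * c q) * (d p * c p) := by simp only [mul_assoc]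

theorem CAR_nn_idem (c d : I → (V →ₗ[ℂ] V))
    (hcd : ∀ p q, c p * d q + d q * c p = if p = q then 1 else 0)
    (hcc : ∀ p q : I, c p * c q + c q * c p = 0) (p : I) :
    (d p * c p) * (d p * c p) = d p * c p := by
  have hbx : c p * d p = 1 - d p * c p :=
    eq_sub_of_add_eq (by rw [hcd p p, if_pos rfl])
  calc (d p * c p) * (d p * c p)
      = d p * ((c p * d p) * c p) := by simp only [mul_assoc]
    _ = d p * ((1 - d p * c p) * c p) := by rw [hbx]
    _ = d p * c p - d p * (d p * (c p * c p)) := by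
        rw [sub_mul, one_mul, mul_sub]; simp only [mul_assoc]
    _ = d p * c p := by rw [CAR_cc_self c hcc p]; simp

theorem CAR_c_prod_vac (c d : I → (V →ₗ[ℂ] V)) (η₀ : V)
    (hcd : ∀ p q, c p * d q + d q * c p = if p = q then 1 else 0)
    (hvac : ∀ p, c p η₀ = 0) :
    ∀ (l : List I) (p : I), p ∉ l → c p ((l.map d).prod η₀) = 0 := by
  intro l
  induction l with
  | nil => intro p _; simpa using hvac p
  | cons q l ih =>
    intro p hp
    have hpq : p ≠ q := fun h => hp (h ▸ (List.mem_cons_self : q ∈ q :: l))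
    have hpl : p ∉ l := fun h => hp (List.mem_cons_of_mem q h)
    have hbx : c p * d q = -(d q * c p) :=
      eq_neg_of_add_eq_zero_left (by rw [hcd p q, if_neg hpq])
    have h1 : ((q :: l).map d).prod η₀ = d q (((l.map d).prod) η₀) := by
      simp [List.prod_cons]
    rw [h1]
    have := LinearMap.congr_fun hbx ((l.map d).prod η₀)
    simp only [Module.End.mul_apply, LinearMap.neg_apply] at this
    rw [this, ih p hpl, map_zero, neg_zero]

theorem CAR_inner_prod_vac (c d : I → (V →ₗ[ℂ] V)) (η₀ : V)
    (hadj : ∀ (p : I) (u v : V), (inner ℂ (d p u) v : ℂ) = inner ℂ u (c p v))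
    (hcd : ∀ p q, c p * d q + d q * c p = if p = q then 1 else 0)
    (hvac : ∀ p, c p η₀ = 0) (hη₀ : ‖η₀‖ = 1) :
    ∀ l : List I, l.Nodup →
      (inner ℂ ((l.map d).prod η₀) ((l.map d).prod η₀) : ℂ) = 1 := by
  intro l
  induction l with
  | nil =>
    intro _
    simp only [List.map_nil, List.prod_nil, Module.End.one_apply]
    rw [inner_self_eq_norm_sq_to_K, hη₀]; norm_num
  | cons p l ih =>
    intro hnd
    have hpl : p ∉ l := (List.nodup_cons.mp hnd).1
    have hnd' : l.Nodup := (List.nodup_cons.mp hnd).2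
    set v := (l.map d).prod η₀ with hv
    have h1 : ((p :: l).map d).prod η₀ = d p v := by simp [List.prod_cons, hv]
    have hcdv : c p (d p v) = v := by
      have hbx : c p * d p = 1 - d p * c p :=
        eq_sub_of_add_eq (by rw [hcd p p, if_pos rfl])
      have := LinearMap.congr_fun hbx v
      simp only [Module.End.mul_apply, LinearMap.sub_apply, Module.End.one_apply] at this
      rw [this, CAR_c_prod_vac c d η₀ hcd hvac l p hpl, map_zero, sub_zero]
    rw [h1, hadj, hcdv, ih hnd']

theorem CAR_nn_prod_vac (c d : I → (V →ₗ[ℂ] V)) (η₀ : V)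
    (hcd : ∀ p q, c p * d q + d q * c p = if p = q then 1 else 0)
    (hdd : ∀ p q : I, d p * d q + d q * d p = 0)
    (hvac : ∀ p, c p η₀ = 0) :
    ∀ l : List I, l.Nodup → ∀ p : I,
      (d p * c p) ((l.map d).prod η₀) =
        (if p ∈ l then (1 : ℂ) else 0) • ((l.map d).prod η₀) := by
  intro l
  induction l with
  | nil =>
    intro _ p
    simp [Module.End.mul_apply, hvac p]
  | cons q l ih =>
    intro hnd p
    have hql : q ∉ l := (List.nodup_cons.mp hnd).1
    have hnd' : l.Nodup := (List.nodup_cons.mp hnd).2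
    set v := (l.map d).prod η₀ with hv
    have h1 : ((q :: l).map d).prod η₀ = d q v := by simp [List.prod_cons, hv]
    rw [h1]
    by_cases hpq : p = q
    · subst hpq
      have hbx : c p * d p = 1 - d p * c p :=
        eq_sub_of_add_eq (by rw [hcd p p, if_pos rfl])
      have hcv : c p v = 0 := CAR_c_prod_vac c d η₀ hcd hvac l p hql
      have h2 : c p (d p v) = v := by
        have := LinearMap.congr_fun hbx v
        simp only [Module.End.mul_apply, LinearMap.sub_apply, Module.End.one_apply] at this
        rw [this, hcv, map_zero, sub_zero]
      simp only [Module.End.mul_apply, h2, List.mem_cons, true_or, if_pos, one_smul]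
    · have hcomm : (d p * c p) * d q = d q * (d p * c p) := by
        have hbx : c p * d q = -(d q * c p) :=
          eq_neg_of_add_eq_zero_left (by rw [hcd p q, if_neg hpq])
        have hax : d p * d q = -(d q * d p) :=
          eq_neg_of_add_eq_zero_left (hdd p q)
        calc (d p * c p) * d q = d p * (c p * d q) := by rw [mul_assoc]
          _ = -((d p * d q) * c p) := by rw [hbx]; simp only [mul_neg, neg_mul, mul_assoc]
          _ = (d q * (d p * c p)) := by rw [hax]; simp only [neg_mul, neg_neg, mul_assoc]
      have := LinearMap.congr_fun hcomm v
      simp only [Module.End.mul_apply] at this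
      have h3 : (d p) (c p (d q v)) = d q ((d p * c p) v) := by
        simpa only [Module.End.mul_apply] using this
      rw [Module.End.mul_apply, h3, ih hnd' p, map_smul]
      simp [List.mem_cons, hpq]

end Aux



/-- In the CAR setting with vacuum for `χᵏ_a : V → V` (`1 ≤ k ≤ n`, `1 ≤ a ≤ 4`),
with `L_k = Σ_a χ̄ᵏ_a∘χᵏ_a − Σ_a χ̄ⁿ_a∘χⁿ_a` for `1 ≤ k < n`:
(i) any joint eigenvalue `σ` of all the `L_k` is an integer with `−4 ≤ σ ≤ 4`;
(ii) every integer `σ` with `−4 ≤ σ ≤ 4` is realised by a joint unit eigenvector;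
(iii) joint eigenvectors belonging to distinct values are orthogonal. -/
theorem eigenvalues_of_Lk {V : Type*} [NormedAddCommGroup V] [InnerProductSpace ℂ V]
    (n : ℕ) (hn : 2 ≤ n) (χ χbar : Fin n → Fin 4 → (V →ₗ[ℂ] V))
    (hadj : ∀ k a (u v : V), (inner ℂ (χbar k a u) v : ℂ) = inner ℂ u (χ k a v))
    (hCAR₁ : ∀ k m a b, χ k a ∘ₗ χbar m b + χbar m b ∘ₗ χ k a =
      if k = m ∧ a = b then LinearMap.id else 0)
    (hCAR₂ : ∀ k m a b, χ k a ∘ₗ χ m b + χ m b ∘ₗ χ k a = 0)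
    (hCAR₃ : ∀ k m a b, χbar k a ∘ₗ χbar m b + χbar m b ∘ₗ χbar k a = 0)
    (η₀ : V) (hη₀ : ‖η₀‖ = 1) (hvac : ∀ k a, χ k a η₀ = 0) :
    -- (i)
    (∀ (σ : ℂ) (η : V), η ≠ 0 →
      (∀ k : Fin n, (k : ℕ) < n - 1 →
        ((∑ a, χbar k a ∘ₗ χ k a) -
         (∑ a, χbar ⟨n - 1, by omega⟩ a ∘ₗ χ ⟨n - 1, by omega⟩ a)) η = σ • η) →
      ∃ z : ℤ, -4 ≤ z ∧ z ≤ 4 ∧ σ = (z : ℂ)) ∧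
    -- (ii)
    (∀ z : ℤ, -4 ≤ z → z ≤ 4 → ∃ η : V, ‖η‖ = 1 ∧
      ∀ k : Fin n, (k : ℕ) < n - 1 →
        ((∑ a, χbar k a ∘ₗ χ k a) -
         (∑ a, χbar ⟨n - 1, by omega⟩ a ∘ₗ χ ⟨n - 1, by omega⟩ a)) η = (z : ℂ) • η) ∧
    -- (iii)
    (∀ (σ σ' : ℂ) (η η' : V), η ≠ 0 → η' ≠ 0 →
      (∀ k : Fin n, (k : ℕ) < n - 1 →
        ((∑ a, χbar k a ∘ₗ χ k a) -
         (∑ a, χbar ⟨n - 1, by omega⟩ a ∘ₗ χ ⟨n - 1, by omega⟩ a)) η = σ • η) →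
      (∀ k : Fin n, (k : ℕ) < n - 1 →
        ((∑ a, χbar k a ∘ₗ χ k a) -
         (∑ a, χbar ⟨n - 1, by omega⟩ a ∘ₗ χ ⟨n - 1, by omega⟩ a)) η' = σ' • η') →
      σ ≠ σ' → (inner ℂ η η' : ℂ) = 0) := by
  classical
  set c : Fin n × Fin 4 → (V →ₗ[ℂ] V) := fun p => χ p.1 p.2 with hc
  set d : Fin n × Fin 4 → (V →ₗ[ℂ] V) := fun p => χbar p.1 p.2 with hd
  have hcd : ∀ p q, c p * d q + d q * c p = if p = q then 1 else 0 := by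
    intro p q
    simpa [c, d, Module.End.mul_eq_comp, Module.End.one_eq_id, Prod.ext_iff] using
      hCAR₁ p.1 q.1 p.2 q.2
  have hcc : ∀ p q, c p * c q + c q * c p = 0 := by
    intro p q
    simpa [c, Module.End.mul_eq_comp] using hCAR₂ p.1 q.1 p.2 q.2
  have hdd : ∀ p q, d p * d q + d q * d p = 0 := by
    intro p q
    simpa [d, Module.End.mul_eq_comp] using hCAR₃ p.1 q.1 p.2 q.2
  have hadj' : ∀ (p : Fin n × Fin 4) (u v : V),
      (inner ℂ (d p u) v : ℂ) = inner ℂ u (c p v) := fun p u v => hadj p.1 p.2 u v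
  have hvac' : ∀ p, c p η₀ = 0 := fun p => hvac p.1 p.2
  set K : Fin n := ⟨n - 1, by omega⟩ with hK
  set k0 : Fin n := ⟨0, by omega⟩ with hk0
  have hk0lt : (k0 : ℕ) < n - 1 := by simp [hk0]; omega
  have hcom : ∀ x y : Fin n × Fin 4, Commute (d x * c x) (d y * c y) :=
    fun x y => CAR_nn_comm c d hcd hcc hdd x y
  have hidem : ∀ x : Fin n × Fin 4, (d x * c x) * (d x * c x) = d x * c x :=
    fun x => CAR_nn_idem c d hcd hcc x
  -- operator rewriting
  have hop : ∀ k : Fin n,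
      ((∑ a, χbar k a ∘ₗ χ k a) - (∑ a, χbar K a ∘ₗ χ K a)) =
      ((d (k,0) * c (k,0) - d (K,0) * c (K,0))
        + (d (k,1) * c (k,1) - d (K,1) * c (K,1))
        + (d (k,2) * c (k,2) - d (K,2) * c (K,2)))
        + (d (k,3) * c (k,3) - d (K,3) * c (K,3)) := by
    intro k
    simp only [Fin.sum_univ_four, c, d, Module.End.mul_eq_comp]
    abel
  have hcomD : ∀ (x y z : Fin n × Fin 4),
      Commute (d x * c x - d y * c y) (d z * c z) :=
    fun x y z => (hcom x z).sub_left (hcom y z)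
  have part1 : ∀ (σ : ℂ) (η : V), η ≠ 0 →
      (∀ k : Fin n, (k : ℕ) < n - 1 →
        ((∑ a, χbar k a ∘ₗ χ k a) - (∑ a, χbar K a ∘ₗ χ K a)) η = σ • η) →
      ∃ z : ℤ, -4 ≤ z ∧ z ≤ 4 ∧ σ = (z : ℂ) := by
    intro σ η hη hyp
    have heig := hyp k0 hk0lt
    rw [hop k0] at heig
    obtain ⟨e3, he3l, he3r, w3, hw3, h3⟩ :=
      CAR_step_lemma _ _ _ (hidem (k0,3)) (hidem (K,3)) (hcom (k0,3) (K,3))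
        ((Commute.add_left (Commute.add_left (hcomD (k0,0) (K,0) (k0,3))
          (hcomD (k0,1) (K,1) (k0,3))) (hcomD (k0,2) (K,2) (k0,3))))
        ((Commute.add_left (Commute.add_left (hcomD (k0,0) (K,0) (K,3))
          (hcomD (k0,1) (K,1) (K,3))) (hcomD (k0,2) (K,2) (K,3))))
        σ η hη heig
    obtain ⟨e2, he2l, he2r, w2, hw2, h2⟩ :=
      CAR_step_lemma _ _ _ (hidem (k0,2)) (hidem (K,2)) (hcom (k0,2) (K,2))
        ((Commute.add_left (hcomD (k0,0) (K,0) (k0,2)) (hcomD (k0,1) (K,1) (k0,2))))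
        ((Commute.add_left (hcomD (k0,0) (K,0) (K,2)) (hcomD (k0,1) (K,1) (K,2))))
        (σ - e3) w3 hw3 h3
    obtain ⟨e1, he1l, he1r, w1, hw1, h1⟩ :=
      CAR_step_lemma _ _ _ (hidem (k0,1)) (hidem (K,1)) (hcom (k0,1) (K,1))
        (hcomD (k0,0) (K,0) (k0,1)) (hcomD (k0,0) (K,0) (K,1))
        (σ - e3 - e2) w2 hw2 h2
    obtain ⟨e0, he0l, he0r, w0, hw0, h0⟩ :=
      CAR_step_lemma 0 _ _ (hidem (k0,0)) (hidem (K,0)) (hcom (k0,0) (K,0))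
        (Commute.zero_left _) (Commute.zero_left _)
        (σ - e3 - e2 - e1) w1 hw1 (by rw [zero_add]; exact h1)
    have hz : σ - e3 - e2 - e1 - (e0 : ℂ) = 0 := by
      have h0' : (σ - e3 - e2 - e1 - (e0 : ℂ)) • w0 = 0 := by
        rw [← h0]; simp
      exact (smul_eq_zero.mp h0').resolve_right hw0
    refine ⟨e0 + e1 + e2 + e3, by omega, by omega, ?_⟩
    push_cast
    linear_combination hz
  -- symmetric operator for part (iii)
  have hterm : ∀ (k : Fin n) (a : Fin 4) (u v : V),
      (inner ℂ ((χbar k a ∘ₗ χ k a) u) v : ℂ) = inner ℂ u ((χbar k a ∘ₗ χ k a) v) := by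
    intro k a u v
    calc (inner ℂ ((χbar k a ∘ₗ χ k a) u) v : ℂ)
        = inner ℂ (χ k a u) (χ k a v) := by rw [LinearMap.comp_apply, hadj]
      _ = (starRingEnd ℂ) (inner ℂ (χ k a v) (χ k a u)) := (inner_conj_symm _ _).symm
      _ = (starRingEnd ℂ) (inner ℂ (χbar k a (χ k a v)) u) := by rw [hadj]
      _ = inner ℂ u ((χbar k a ∘ₗ χ k a) v) := by rw [LinearMap.comp_apply, inner_conj_symm]
  have hsym : ∀ (u v : V),
      (inner ℂ (((∑ a, χbar k0 a ∘ₗ χ k0 a) - (∑ a, χbar K a ∘ₗ χ K a)) u) v : ℂ) =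
      inner ℂ u (((∑ a, χbar k0 a ∘ₗ χ k0 a) - (∑ a, χbar K a ∘ₗ χ K a)) v) := by
    intro u v
    simp only [LinearMap.sub_apply, LinearMap.sum_apply, inner_sub_left, inner_sub_right,
      sum_inner, inner_sum]
    rw [Finset.sum_congr rfl (fun a _ => hterm k0 a u v),
        Finset.sum_congr rfl (fun a _ => hterm K a u v)]
  -- builder for part (ii)
  have builder : ∀ l : List (Fin n × Fin 4), l.Nodup →
      ∀ k : Fin n,
      ((∑ a, χbar k a ∘ₗ χ k a) - (∑ a, χbar K a ∘ₗ χ K a)) ((l.map d).prod η₀) =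
      ((∑ a : Fin 4, if (k,a) ∈ l then (1:ℂ) else 0) -
       (∑ a : Fin 4, if (K,a) ∈ l then (1:ℂ) else 0)) • ((l.map d).prod η₀) := by
    intro l hl k
    have hnn := CAR_nn_prod_vac c d η₀ hcd hdd hvac' l hl
    have h1 : ∀ kk : Fin n, (∑ a, χbar kk a ∘ₗ χ kk a) ((l.map d).prod η₀)
        = (∑ a : Fin 4, if (kk,a) ∈ l then (1:ℂ) else 0) • ((l.map d).prod η₀) := by
      intro kk
      rw [LinearMap.sum_apply, Finset.sum_smul]
      refine Finset.sum_congr rfl (fun a _ => ?_)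
      have := hnn (kk, a)
      refine Eq.trans ?_ this.symm |>.symm
      by_cases hmem : (kk,a) ∈ l
      · rw [if_pos hmem, if_pos hmem]
      · rw [if_neg hmem, if_neg hmem]
    rw [LinearMap.sub_apply, h1 k, h1 K, sub_smul]
  have hcount : ∀ m : ℕ, m ≤ 4 →
      (∑ a : Fin 4, if (a:ℕ) < m then (1:ℂ) else 0) = m := by
    intro m hm
    interval_cases m <;> rw [Fin.sum_univ_four] <;> norm_num <;> decide
  have hnorm1 : ∀ l : List (Fin n × Fin 4), l.Nodup → ‖(l.map d).prod η₀‖ = 1 := by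
    intro l hl
    have h := CAR_inner_prod_vac c d η₀ hadj' hcd hvac' hη₀ l hl
    have h4 := (inner_self_eq_norm_sq_to_K (𝕜 := ℂ) ((l.map d).prod η₀)).symm.trans h
    have h3 : ‖(l.map d).prod η₀‖^2 = 1 := by
      rw [← @RCLike.ofReal_one ℂ _, ← RCLike.ofReal_pow] at h4
      exact RCLike.ofReal_inj.mp h4
    nlinarith [norm_nonneg ((l.map d).prod η₀), h3]
  have part2 : ∀ z : ℤ, -4 ≤ z → z ≤ 4 → ∃ η : V, ‖η‖ = 1 ∧
      ∀ k : Fin n, (k:ℕ) < n - 1 →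
        ((∑ a, χbar k a ∘ₗ χ k a) - (∑ a, χbar K a ∘ₗ χ K a)) η = (z:ℂ) • η := by
    intro z hz1 hz2
    rcases le_or_gt 0 z with hzpos | hzneg
    · set m := z.toNat with hm
      have hm4 : m ≤ 4 := by omega
      have hmz : (m : ℂ) = (z : ℂ) := by
        rw [hm]
        exact_mod_cast congrArg (Int.cast : ℤ → ℂ) (Int.toNat_of_nonneg hzpos)
      set la : List (Fin 4) := (List.finRange 4).filter (fun a => decide ((a:ℕ) < m)) with hla
      have hland : la.Nodup := (List.nodup_finRange 4).filter _
      have hamem : ∀ a : Fin 4, a ∈ la ↔ (a:ℕ) < m := by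
        intro a; simp [hla, List.mem_filter]
      set ks : List (Fin n) := (List.finRange n).filter (fun k => decide ((k:ℕ) < n - 1)) with hks
      have hksnd : ks.Nodup := (List.nodup_finRange n).filter _
      have hkmem : ∀ k : Fin n, k ∈ ks ↔ (k:ℕ) < n - 1 := by
        intro k; simp [hks, List.mem_filter]
      set l : List (Fin n × Fin 4) := ks ×ˢ la with hl
      have hlnd : l.Nodup := hksnd.product hland
      have hpmem : ∀ (k : Fin n) (a : Fin 4), ((k,a) ∈ l ↔ ((k:ℕ) < n - 1 ∧ (a:ℕ) < m)) := by
        intro k a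
        rw [hl, show ks ×ˢ la = ks.product la from rfl, List.pair_mem_product, hkmem, hamem]
      refine ⟨(l.map d).prod η₀, hnorm1 l hlnd, ?_⟩
      intro k hk
      rw [builder l hlnd k]
      congr 1
      have hiff : ∀ a : Fin 4, ((k,a) ∈ l ↔ (a:ℕ) < m) := by
        intro a; rw [hpmem k a]; simp [hk]
      have hs1 : (∑ a : Fin 4, if (k,a) ∈ l then (1:ℂ) else 0) = m := by
        rw [Finset.sum_congr rfl (fun a _ => if_congr (hiff a) rfl rfl)]
        exact hcount m hm4
      have hs2 : (∑ a : Fin 4, if (K,a) ∈ l then (1:ℂ) else 0) = 0 := by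
        have hKn : ∀ a : Fin 4, ¬((K,a) ∈ l) := by
          intro a h
          have := (hpmem K a).mp h
          simp [hK] at this
        rw [Finset.sum_congr rfl (fun a _ => if_neg (hKn a))]
        simp
      rw [hs1, hs2, sub_zero, hmz]
    · set m := (-z).toNat with hm
      have hm4 : m ≤ 4 := by omega
      have hmz : (0 : ℂ) - (m : ℂ) = (z : ℂ) := by
        have h5 : ((m : ℤ) : ℂ) = ((-z : ℤ) : ℂ) := by
          rw [hm, Int.toNat_of_nonneg (by omega)]
        push_cast at h5 ⊢
        linear_combination -h5
      set la : List (Fin 4) := (List.finRange 4).filter (fun a => decide ((a:ℕ) < m)) with hla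
      have hland : la.Nodup := (List.nodup_finRange 4).filter _
      have hamem : ∀ a : Fin 4, a ∈ la ↔ (a:ℕ) < m := by
        intro a; simp [hla, List.mem_filter]
      set l : List (Fin n × Fin 4) := la.map (fun a => (K, a)) with hl
      have hlnd : l.Nodup := List.Nodup.map (fun a b h => (Prod.ext_iff.mp h).2) hland
      have hpmem : ∀ (k : Fin n) (a : Fin 4), ((k,a) ∈ l ↔ (k = K ∧ (a:ℕ) < m)) := by
        intro k a
        rw [hl]
        simp only [List.mem_map, Prod.mk.injEq]
        constructor
        · rintro ⟨x, hx, h1, h2⟩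
          exact ⟨h1.symm, by rw [← h2]; exact (hamem x).mp hx⟩
        · rintro ⟨h1, h2⟩
          exact ⟨a, (hamem a).mpr h2, h1.symm, rfl⟩
      refine ⟨(l.map d).prod η₀, hnorm1 l hlnd, ?_⟩
      intro k hk
      rw [builder l hlnd k]
      congr 1
      have hkK : k ≠ K := by
        intro h
        have := congrArg Fin.val h
        rw [hK] at this
        simp at this
        omega
      have hs1 : (∑ a : Fin 4, if (k,a) ∈ l then (1:ℂ) else 0) = 0 := by
        have hKn : ∀ a : Fin 4, ¬((k,a) ∈ l) := by
          intro a h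
          exact hkK ((hpmem k a).mp h).1
        rw [Finset.sum_congr rfl (fun a _ => if_neg (hKn a))]
        simp
      have hiff : ∀ a : Fin 4, ((K,a) ∈ l ↔ (a:ℕ) < m) := by
        intro a; rw [hpmem K a]; simp
      have hs2 : (∑ a : Fin 4, if (K,a) ∈ l then (1:ℂ) else 0) = m := by
        rw [Finset.sum_congr rfl (fun a _ => if_congr (hiff a) rfl rfl)]
        exact hcount m hm4
      rw [hs1, hs2, hmz]
  exact ⟨part1, part2, fun σ σ' η η' hη hη' hyp hyp' hne => by
    obtain ⟨z, _, _, hzσ⟩ := part1 σ η hη hyp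
    have heig := hyp k0 hk0lt
    have heig' := hyp' k0 hk0lt
    have h := hsym η η'
    rw [heig, heig', inner_smul_left, inner_smul_right] at h
    have hconj : (starRingEnd ℂ) σ = σ := by rw [hzσ]; exact map_intCast _ z
    rw [hconj] at h
    have h2 : (σ - σ') * (inner ℂ η η' : ℂ) = 0 := by linear_combination h
    exact (mul_eq_zero.mp h2).resolve_left (sub_ne_zero.mpr hne)⟩
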